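/- Let R be a commutative ring of prime characteristic p > 0 and r_0, r_1, r_2 elements of R. For each n ≥ 1 let M_n be the n×n tridiagonal matrix with r_1 on the main diagonal, r_0 on the superdiagonal, and r_2 on the subdiagonal. Then for every integer e ≥ 1, det M_{p^e−1} = (det M_{p−1})^{1+p+⋯+p^{e−1}}. -/

import Mathlib

/-- The `n × n` tridiagonal matrix with `r₁` on the main diagonal, `r₀` on the superdiagonal and
`r₂` on the subdiagonal. -/
def tridiag {R : Type} [CommRing R] (r₀ r₁ r₂ : R) (n : ℕ) : Matrix (Fin n) (Fin n) R :=
  Matrix.of fun i j =>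
    if (i : ℕ) = (j : ℕ) then r₁
    else if (j : ℕ) = (i : ℕ) + 1 then r₀
    else if (i : ℕ) = (j : ℕ) + 1 then r₂
    else 0

/-- The sequence of determinants of the tridiagonal matrices, as a two-term recurrence. -/
def dseq' {R : Type*} [CommRing R] (q x : R) : ℕ → R
  | 0 => 1
  | 1 => x
  | (n+2) => x * dseq' q x (n+1) - q * dseq' q x n

lemma coe_succAbove_one {n : ℕ} (j : Fin (n+1)) :
    (((1 : Fin (n+2)).succAbove j : ℕ)) = if (j : ℕ) = 0 then 0 else (j : ℕ) + 1 := by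
  rcases Nat.eq_zero_or_pos (j : ℕ) with h | h
  · rw [if_pos h, Fin.succAbove_of_castSucc_lt]
    · simp [h]
    · rw [Fin.lt_def]; simpa using h
  · rw [if_neg (by omega), Fin.succAbove_of_le_castSucc]
    · simp
    · rw [Fin.le_def]; simp; omega

lemma sub00 {R : Type} [CommRing R] (r₀ r₁ r₂ : R) (n : ℕ) :
    (tridiag r₀ r₁ r₂ (n+2)).submatrix Fin.succ ((0 : Fin (n+2)).succAbove) =
      tridiag r₀ r₁ r₂ (n+1) := by
  ext i j
  simp [tridiag, Fin.zero_succAbove, Matrix.submatrix]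

lemma sub01_col {R : Type} [CommRing R] (r₀ r₁ r₂ : R) (n : ℕ) (i : Fin (n+1)) :
    ((tridiag r₀ r₁ r₂ (n+2)).submatrix Fin.succ ((1 : Fin (n+2)).succAbove)) i 0 =
      if (i : ℕ) = 0 then r₂ else 0 := by
  rw [Matrix.submatrix_apply]
  have hi := i.isLt
  simp only [tridiag, Matrix.of_apply, coe_succAbove_one, Fin.val_succ, Fin.val_zero]
  split_ifs <;> first | rfl | omega | tauto

lemma sub01_sub {R : Type} [CommRing R] (r₀ r₁ r₂ : R) (n : ℕ) :
    ((tridiag r₀ r₁ r₂ (n+2)).submatrix Fin.succ ((1 : Fin (n+2)).succAbove)).submatrix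
      ((0 : Fin (n+1)).succAbove) Fin.succ = tridiag r₀ r₁ r₂ n := by
  ext i j
  have hi := i.isLt
  have hj := j.isLt
  simp only [Matrix.submatrix_apply, Fin.zero_succAbove]
  simp only [tridiag, Matrix.of_apply, coe_succAbove_one, Fin.val_succ]
  split_ifs <;> first | rfl | omega | tauto

lemma row0 {R : Type} [CommRing R] (r₀ r₁ r₂ : R) (n : ℕ) (j : Fin (n+2)) :
    tridiag r₀ r₁ r₂ (n+2) 0 j =
      if (j : ℕ) = 0 then r₁ else if (j : ℕ) = 1 then r₀ else 0 := by
  have hj := j.isLt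
  simp only [tridiag, Matrix.of_apply, Fin.val_zero]
  split_ifs <;> first | rfl | omega | tauto

lemma det_tridiag_pair {R : Type} [CommRing R] (r₀ r₁ r₂ : R) : ∀ n : ℕ,
    (tridiag r₀ r₁ r₂ n).det = dseq' (r₀ * r₂) r₁ n ∧
    (tridiag r₀ r₁ r₂ (n+1)).det = dseq' (r₀ * r₂) r₁ (n+1) := by
  intro n
  induction n with
  | zero =>
    constructor
    · simp [Matrix.det_fin_zero, dseq']
    · rw [Matrix.det_fin_one]
      simp [tridiag, dseq']
  | succ n ih =>
    refine ⟨ih.2, ?_⟩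
    have hB : ((tridiag r₀ r₁ r₂ (n+2)).submatrix Fin.succ ((1 : Fin (n+2)).succAbove)).det =
        r₂ * dseq' (r₀ * r₂) r₁ n := by
      rw [Matrix.det_succ_column_zero, Fin.sum_univ_succ]
      rw [Finset.sum_eq_zero (fun i _ => by rw [sub01_col]; simp)]
      rw [sub01_col, sub01_sub]
      simp [ih.1]
    rw [Matrix.det_succ_row_zero, Fin.sum_univ_succ, Fin.sum_univ_succ]
    rw [Finset.sum_eq_zero (fun j _ => by rw [row0]; simp [Fin.val_succ])]
    rw [Fin.succ_zero_eq_one, sub00, hB, row0, row0]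
    simp only [Fin.val_zero, Fin.val_one, ih]
    norm_num
    show _ = dseq' (r₀ * r₂) r₁ (n+2)
    rw [dseq']
    ring

open MvPolynomial

lemma map_dseq' {R S : Type*} [CommRing R] [CommRing S] (f : R →+* S) (q x : R) :
    ∀ n, f (dseq' q x n) = dseq' (f q) (f x) n := by
  have H : ∀ n, f (dseq' q x n) = dseq' (f q) (f x) n ∧
      f (dseq' q x (n+1)) = dseq' (f q) (f x) (n+1) := by
    intro n
    induction n with
    | zero => exact ⟨by simp [dseq'], by simp [dseq']⟩
    | succ n ih =>
      refine ⟨ih.2, ?_⟩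
      show f (dseq' q x (n+2)) = dseq' (f q) (f x) (n+2)
      rw [dseq', dseq', map_sub, map_mul, map_mul, ih.1, ih.2]
  exact fun n => (H n).1

lemma dseq'_ab {R : Type*} [CommRing R] (a b : R) :
    ∀ n, dseq' (a*b) (a+b) n * (a - b) = a^(n+1) - b^(n+1) := by
  have H : ∀ n, dseq' (a*b) (a+b) n * (a - b) = a^(n+1) - b^(n+1) ∧
      dseq' (a*b) (a+b) (n+1) * (a - b) = a^(n+2) - b^(n+2) := by
    intro n
    induction n with
    | zero => exact ⟨by simp [dseq'], by rw [dseq']; ring⟩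
    | succ n ih =>
      refine ⟨ih.2, ?_⟩
      show dseq' (a*b) (a+b) (n+2) * (a - b) = a^(n+3) - b^(n+3)
      rw [dseq']
      have h1 := ih.1
      have h2 := ih.2
      linear_combination (a+b) * h2 - (a*b) * h1
  exact fun n => (H n).1

lemma dseq'_frob (p : ℕ) [Fact p.Prime] {R : Type*} [CommRing R] [CharP R p] (a b : R)
    (m : ℕ) : dseq' (a*b) (a+b) (p^m - 1) * (a - b) = (a - b)^(p^m) := by
  have h1 : 1 ≤ p^m := Nat.one_le_pow _ _ (Fact.out : p.Prime).pos
  rw [dseq'_ab, Nat.sub_add_cancel h1, sub_pow_char_pow]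

lemma geom_aux (p : ℕ) (hp : 1 ≤ p) (e : ℕ) :
    (p - 1) * (∑ j ∈ Finset.range e, p ^ j) + 1 = p ^ e := by
  induction e with
  | zero => simp
  | succ e ih =>
    obtain ⟨q, rfl⟩ : ∃ q, p = q + 1 := ⟨p - 1, by omega⟩
    rw [Finset.sum_range_succ, Nat.mul_add, pow_succ]
    simp only [Nat.add_sub_cancel] at ih ⊢
    calc q * ∑ j ∈ Finset.range e, (q+1) ^ j + q * (q+1)^e + 1
        = (q * ∑ j ∈ Finset.range e, (q+1) ^ j + 1) + q * (q+1)^e := by ring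
      _ = (q+1)^e + q * (q+1)^e := by rw [ih]
      _ = (q+1)^e * (q+1) := by ring

lemma T_ident (p : ℕ) [Fact p.Prime] {R : Type*} [CommRing R] [CharP R p] [IsDomain R]
    (a b : R) (hab : a ≠ b) (e : ℕ) :
    dseq' (a*b) (a+b) (p^e - 1) = dseq' (a*b) (a+b) (p - 1) ^ (∑ j ∈ Finset.range e, p ^ j) := by
  set k := ∑ j ∈ Finset.range e, p ^ j with hk
  have hp1 : 1 ≤ p := (Fact.out : p.Prime).pos
  have hgeom := geom_aux p hp1 e
  have hpe : 1 ≤ p ^ e := Nat.one_le_pow _ _ hp1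
  rw [← hk] at hgeom
  have hpk : p * k = (p ^ e - 1) + k := by
    have h3 : (p - 1) * k = p * k - k := Nat.sub_one_mul p k
    have h4 : k ≤ p * k := Nat.le_mul_of_pos_left k hp1
    omega
  have h1 : dseq' (a*b) (a+b) (p^e - 1) * (a - b) = (a - b)^(p^e) := dseq'_frob p a b e
  have h2 : dseq' (a*b) (a+b) (p - 1) * (a - b) = (a - b)^p := by
    have := dseq'_frob p a b 1
    simpa using this
  have hab' : a - b ≠ 0 := sub_ne_zero.mpr hab
  apply mul_right_cancel₀ (pow_ne_zero (k+1) hab')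
  calc dseq' (a*b) (a+b) (p^e - 1) * (a - b)^(k+1)
      = (dseq' (a*b) (a+b) (p^e - 1) * (a-b)) * (a-b)^k := by ring
    _ = (a - b)^(p^e + k) := by rw [h1, ← pow_add]
    _ = ((a-b)^p)^k * (a-b) := by
        rw [← pow_mul, ← pow_succ]
        congr 1
        omega
    _ = (dseq' (a*b) (a+b) (p - 1) * (a-b))^k * (a-b) := by rw [h2]
    _ = dseq' (a*b) (a+b) (p - 1) ^ k * (a - b)^(k+1) := by rw [mul_pow]; ring

section Inj
variable (p : ℕ) [Fact p.Prime]

/-- The substitution `q ↦ ab`, `x ↦ a + b`. -/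
noncomputable def symSub (K : Type*) [Field K] :
    MvPolynomial (Fin 2) K →+* MvPolynomial (Fin 2) K :=
  eval₂Hom C ![X 0 * X 1, X 0 + X 1]

lemma symSub_inj_of_algClosed (K : Type*) [Field K] [IsAlgClosed K] [Infinite K] :
    Function.Injective (symSub K) := by
  intro f g h
  apply MvPolynomial.funext
  intro v
  -- find u with u^2 - (v 1) * u + v 0 = 0
  obtain ⟨u, hu⟩ := IsAlgClosed.exists_root
    (Polynomial.C 1 * Polynomial.X ^ 2 + Polynomial.C (-(v 1)) * Polynomial.X
      + Polynomial.C (v 0)) (by rw [Polynomial.degree_quadratic one_ne_zero]; simp)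
  have hu' : u ^ 2 - v 1 * u + v 0 = 0 := by
    have := hu
    simp only [Polynomial.IsRoot, Polynomial.eval_add, Polynomial.eval_mul, Polynomial.eval_pow,
      Polynomial.eval_C, Polynomial.eval_X, one_mul, neg_mul] at this
    linear_combination this
  have hev : (eval ![u, v 1 - u]).comp (symSub K) = eval v := by
    apply ringHom_ext
    · intro r
      simp [symSub]
    · intro i
      simp only [RingHom.comp_apply, eval_X]
      fin_cases i
      · simp only [Fin.mk_zero, symSub, eval₂Hom_X', Matrix.cons_val_zero, map_mul, eval_X,
          Matrix.cons_val_one, Matrix.head_cons]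
        linear_combination -hu'
      · simp only [Fin.mk_one, symSub, eval₂Hom_X', Matrix.cons_val_one, Matrix.head_cons,
          map_add, eval_X, Matrix.cons_val_zero]
        ring
  calc eval v f = eval ![u, v 1 - u] ((symSub K) f) := (RingHom.congr_fun hev f).symm
    _ = eval ![u, v 1 - u] ((symSub K) g) := by rw [h]
    _ = eval v g := RingHom.congr_fun hev g

lemma symSub_inj : Function.Injective (symSub (ZMod p)) := by
  intro f g h
  set K := AlgebraicClosure (ZMod p)
  have hmap : (MvPolynomial.map (algebraMap (ZMod p) K)).comp (symSub (ZMod p)) =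
      (symSub K).comp (MvPolynomial.map (algebraMap (ZMod p) K)) := by
    apply ringHom_ext
    · intro r; simp [symSub]
    · intro i
      simp only [RingHom.comp_apply]
      fin_cases i
      · simp [symSub]
      · simp [symSub]
  have h2 : (symSub K) (MvPolynomial.map (algebraMap (ZMod p) K) f) =
      (symSub K) (MvPolynomial.map (algebraMap (ZMod p) K) g) := by
    have hf := RingHom.congr_fun hmap f
    have hg := RingHom.congr_fun hmap g
    simp only [RingHom.comp_apply] at hf hg
    rw [← hf, ← hg, h]
  have h3 := symSub_inj_of_algClosed K h2
  exact MvPolynomial.map_injective _ (algebraMap (ZMod p) K).injective h3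

lemma R0_ident (e : ℕ) :
    dseq' (X 0 : MvPolynomial (Fin 2) (ZMod p)) (X 1) (p^e - 1) =
      dseq' (X 0 : MvPolynomial (Fin 2) (ZMod p)) (X 1) (p - 1) ^
        (∑ j ∈ Finset.range e, p ^ j) := by
  apply symSub_inj p
  rw [map_pow, map_dseq', map_dseq']
  have h0 : (symSub (ZMod p)) (X 0) = X 0 * X 1 := by simp [symSub]
  have h1 : (symSub (ZMod p)) (X 1) = X 0 + X 1 := by simp [symSub]
  rw [h0, h1]
  have hab : (X 0 : MvPolynomial (Fin 2) (ZMod p)) ≠ X 1 :=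
    fun h => absurd (X_injective h) (by decide)
  exact T_ident p _ _ hab e

end Inj

/-- In a commutative ring of prime characteristic `p`, the determinant of the tridiagonal matrix of
size `p^e - 1` is the `(1 + p + ⋯ + p^(e-1))`-th power of the determinant of the one of size
`p - 1`. -/
theorem stmt_6 {R : Type} [CommRing R] (p : ℕ) (hp : p.Prime) [CharP R p]
    (r₀ r₁ r₂ : R) (e : ℕ) (he : 1 ≤ e) :
    (tridiag r₀ r₁ r₂ (p ^ e - 1)).det =
      (tridiag r₀ r₁ r₂ (p - 1)).det ^ (∑ j ∈ Finset.range e, p ^ j) := by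
  haveI := Fact.mk hp
  rw [(det_tridiag_pair r₀ r₁ r₂ (p ^ e - 1)).1, (det_tridiag_pair r₀ r₁ r₂ (p - 1)).1]
  let g : MvPolynomial (Fin 2) (ZMod p) →+* R :=
    MvPolynomial.eval₂Hom (ZMod.castHom dvd_rfl R) ![r₀ * r₂, r₁]
  have hg0 : g (X 0) = r₀ * r₂ := by simp [g]
  have hg1 : g (X 1) = r₁ := by simp [g]
  have := congrArg g (R0_ident p e)
  rw [map_pow, map_dseq', map_dseq', hg0, hg1] at this
  exact this
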